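/- The following identities hold: b00 = (α2−β2)(α2−β3)(α3−β2)(α3−β3); b22² − 4·b40·b04 = (τ2 − ρ2)² = (α2α3 − β2β3)²; b20² − 4·b40·b00 = (β2−β3)²·(α2α3 − β2β3)²; b02² − 4·b04·b00 = (α2−α3)²·(α2α3 − β2β3)²; and b20²·b04 − b20·b22·b02 + b02²·b40 + b22²·b00 − 4·b40·b00·b04 = (α2α3 − β2β3)⁴. Moreover, if α2, α3, β2, β3 are pairwise distinct and all nonzero, then b40 ≠ 0, b04 ≠ 0 and b00 ≠ 0; and if in addition α2·α3 ≠ β2·β3, then b22² − 4b40b04, b20² − 4b40b00, b02² − 4b04b00 and b20²b04 − b20b22b02 + b02²b40 + b22²b00 − 4b40b00b04 are all nonzero. -/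
import Mathlib


/-- Lemma 4.5 of the paper: identities among the coefficients of the quartic `f`,
and their nonvanishing under the stated genericity conditions. -/
theorem quartic_coefficient_identities
    {k : Type*} [Field k]
    (α2 α3 β2 β3 τ1 τ2 ρ1 ρ2 b40 b22 b04 b20 b02 b00 : k)
    (hτ1 : τ1 = α2 + α3) (hτ2 : τ2 = α2 * α3)
    (hρ1 : ρ1 = β2 + β3) (hρ2 : ρ2 = β2 * β3)
    (hb40 : b40 = ρ2) (hb22 : b22 = -(τ2 + ρ2)) (hb04 : b04 = τ2)
    (hb20 : b20 = 2 * τ1 * ρ2 - τ2 * ρ1 - ρ1 * ρ2)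
    (hb02 : b02 = -(τ1 * τ2) - τ1 * ρ2 + 2 * τ2 * ρ1)
    (hb00 : b00 = τ1 ^ 2 * ρ2 - τ1 * τ2 * ρ1 - τ1 * ρ1 * ρ2 + τ2 ^ 2
        + τ2 * ρ1 ^ 2 - 2 * τ2 * ρ2 + ρ2 ^ 2) :
    b00 = (α2 - β2) * (α2 - β3) * (α3 - β2) * (α3 - β3)
    ∧ b22 ^ 2 - 4 * b40 * b04 = (τ2 - ρ2) ^ 2
    ∧ (τ2 - ρ2) ^ 2 = (α2 * α3 - β2 * β3) ^ 2
    ∧ b20 ^ 2 - 4 * b40 * b00 = (β2 - β3) ^ 2 * (α2 * α3 - β2 * β3) ^ 2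
    ∧ b02 ^ 2 - 4 * b04 * b00 = (α2 - α3) ^ 2 * (α2 * α3 - β2 * β3) ^ 2
    ∧ b20 ^ 2 * b04 - b20 * b22 * b02 + b02 ^ 2 * b40 + b22 ^ 2 * b00
        - 4 * b40 * b00 * b04 = (α2 * α3 - β2 * β3) ^ 4
    ∧ ((α2 ≠ α3 ∧ α2 ≠ β2 ∧ α2 ≠ β3 ∧ α3 ≠ β2 ∧ α3 ≠ β3 ∧ β2 ≠ β3
        ∧ α2 ≠ 0 ∧ α3 ≠ 0 ∧ β2 ≠ 0 ∧ β3 ≠ 0) →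
      (b40 ≠ 0 ∧ b04 ≠ 0 ∧ b00 ≠ 0
        ∧ (α2 * α3 ≠ β2 * β3 →
            b22 ^ 2 - 4 * b40 * b04 ≠ 0
            ∧ b20 ^ 2 - 4 * b40 * b00 ≠ 0
            ∧ b02 ^ 2 - 4 * b04 * b00 ≠ 0
            ∧ b20 ^ 2 * b04 - b20 * b22 * b02 + b02 ^ 2 * b40 + b22 ^ 2 * b00
                - 4 * b40 * b00 * b04 ≠ 0))) := by

  subst hτ1 hτ2 hρ1 hρ2 hb40 hb22 hb04 hb20 hb02 hb00
  have h00 : (α2 + α3) ^ 2 * (β2 * β3) - (α2 + α3) * (α2 * α3) * (β2 + β3)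
      - (α2 + α3) * (β2 + β3) * (β2 * β3) + (α2 * α3) ^ 2 + (α2 * α3) * (β2 + β3) ^ 2
      - 2 * (α2 * α3) * (β2 * β3) + (β2 * β3) ^ 2
      = (α2 - β2) * (α2 - β3) * (α3 - β2) * (α3 - β3) := by ring
  refine ⟨h00, by ring, by ring, by ring, by ring, by ring, ?_⟩
  rintro ⟨h23, h2b2, h2b3, h3b2, h3b3, hbb, ha2, ha3, hb2, hb3⟩
  have hd : α2 * α3 - β2 * β3 ≠ 0 → (α2 * α3 - β2 * β3) ≠ 0 := id
  refine ⟨mul_ne_zero hb2 hb3, mul_ne_zero ha2 ha3, ?_, ?_⟩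
  · rw [h00]
    exact mul_ne_zero (mul_ne_zero (mul_ne_zero (sub_ne_zero.2 h2b2) (sub_ne_zero.2 h2b3))
      (sub_ne_zero.2 h3b2)) (sub_ne_zero.2 h3b3)
  · intro hne
    have hne' : α2 * α3 - β2 * β3 ≠ 0 := sub_ne_zero.2 hne
    refine ⟨?_, ?_, ?_, ?_⟩
    · have : (α2 * α3 + β2 * β3) ^ 2 - 4 * (β2 * β3) * (α2 * α3)
          = (α2 * α3 - β2 * β3) ^ 2 := by ring
      calc _ = (α2 * α3 - β2 * β3) ^ 2 := by ring
      _ ≠ 0 := pow_ne_zero _ hne'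
    · calc _ = (β2 - β3) ^ 2 * (α2 * α3 - β2 * β3) ^ 2 := by ring
      _ ≠ 0 := mul_ne_zero (pow_ne_zero _ (sub_ne_zero.2 hbb)) (pow_ne_zero _ hne')
    · calc _ = (α2 - α3) ^ 2 * (α2 * α3 - β2 * β3) ^ 2 := by ring
      _ ≠ 0 := mul_ne_zero (pow_ne_zero _ (sub_ne_zero.2 h23)) (pow_ne_zero _ hne')
    · calc _ = (α2 * α3 - β2 * β3) ^ 4 := by ring
      _ ≠ 0 := pow_ne_zero _ hne'
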